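/- arXiv:1112.0352 — 3 statements merged into one kernel-verified Lean document; each statement's English description precedes it below -/
import Mathlib

section
/- Let N be a normal subgroup of G, c : G → Der a 1-cocycle (c_{gh} = c_g + g·c_h), and D : G/N → Der_k(k[[y_N]]) the 1-cocycle determined by D_ḡ(y_N) = ρ(g)(y_N)·(y_N'/(ρ(g)(y_N))')·Σ_{s∈N} c_{gs}(f_{gs})/f_{gs} − y_N·Σ_{s∈N} c_s(f_s)/f_s. Then there exists α ∈ k((t)) with ord(α) ≥ ord(y_G') − ord(y_N') such that for every g ∈ G: ρ(g)(α) − α = c_g(y_G) − D_{gN}(y_G), where D_{gN}(y_G) denotes the value of the derivation D_{gN} of k[[y_N]] at the element y_G ∈ k[[y_N]]. Consequently the two 1-cocycles g ↦ c_g(y_G) and g ↦ D_{gN}(y_G) on G, with values in the G-stable ideal (y_G'/y_N')·k[[t]] (G acting via ρ), define the same cohomology class. -/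
open PowerSeries

/-- the canonical embedding `k[[t]] → k((t))`. -/
noncomputable def toL {k : Type} [Field k] (x : PowerSeries k) : LaurentSeries k :=
  HahnSeries.ofPowerSeries ℤ k x

/-- `ord(x) ≥ n` for the `t`-adic valuation on `k((t))` (with `ord 0 = ∞`). -/
def ordGE {k : Type} [Field k] (x : LaurentSeries k) (n : ℤ) : Prop :=
  x = 0 ∨ n ≤ HahnSeries.order x

namespace St14


theorem coeff_pow_p {p : ℕ} [Fact p.Prime] {k : Type} [Field k] [CharP k p] (f : PowerSeries k) (n : ℕ) :
    PowerSeries.coeff n (f ^ p) = if p ∣ n then (PowerSeries.coeff (n / p) f) ^ p else 0 := by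
  have hp : 0 < p := (Fact.out : p.Prime).pos
  have h1 : PowerSeries.coeff n (f ^ p)
      = Polynomial.coeff (trunc (n+1) (f ^ p)) n := by
    rw [coeff_trunc]; simp [Nat.lt_succ_self]
  rw [h1, ← trunc_trunc_pow f (n+1) p, coeff_trunc, if_pos (Nat.lt_succ_self n),
    ← Polynomial.coe_pow, ← Polynomial.map_frobenius_expand, Polynomial.coeff_coe,
    Polynomial.coeff_map, Polynomial.coeff_expand hp]
  split_ifs with h
  · rw [frobenius_def, coeff_trunc, if_pos (Nat.lt_succ_of_le (Nat.div_le_self n p))]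
  · rw [map_zero]

theorem decomp {p : ℕ} [Fact p.Prime] {k : Type} [Field k] [CharP k p] [PerfectField k] (f : PowerSeries k) :
    f = ∑ i ∈ Finset.range p,
      (PowerSeries.mk fun j => (frobeniusEquiv k p).symm (PowerSeries.coeff (p*j+i) f)) ^ p
        * PowerSeries.X ^ i := by
  have hp : 0 < p := (Fact.out : p.Prime).pos
  ext n
  rw [map_sum]
  rw [Finset.sum_eq_single (n % p)]
  · have h0 := Nat.div_add_mod n p
    have hdvd : p ∣ n - n % p := ⟨n / p, by omega⟩
    rw [coeff_mul_X_pow', if_pos (Nat.mod_le n p), coeff_pow_p, if_pos hdvd, coeff_mk]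
    have h2 : (n - n % p) / p = n / p := by
      rw [show n - n % p = p * (n / p) by omega, Nat.mul_div_cancel_left _ hp]
    rw [h2, show p * (n / p) + n % p = n by omega, ← frobenius_def,
      frobenius_apply_frobeniusEquiv_symm]
  · intro i hi hne
    rw [coeff_mul_X_pow']
    split_ifs with hle
    · rw [coeff_pow_p]
      split_ifs with hdvd
      · exfalso
        obtain ⟨m, hm⟩ := hdvd
        have h3 : n = p * m + i := by omega
        have : n % p = i % p := by rw [h3, Nat.mul_add_mod]
        rw [Nat.mod_eq_of_lt (Finset.mem_range.mp hi)] at this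
        exact hne this.symm
      · rfl
    · rfl
  · intro h
    exact absurd (Finset.mem_range.mpr (Nat.mod_lt n hp)) h



theorem derivation_eq_derivative {p : ℕ} [Fact p.Prime] {k : Type} [Field k] [CharP k p]
    [PerfectField k] (D : Derivation k (PowerSeries k) (PowerSeries k)) (f : PowerSeries k) :
    D f = PowerSeries.derivative k f * D PowerSeries.X := by
  have hp0 : (p : PowerSeries k) = 0 := by
    rw [← map_natCast (PowerSeries.C (R := k)) p, CharP.cast_eq_zero, map_zero]
  have key : ∀ (E : Derivation k (PowerSeries k) (PowerSeries k)),
      E f = (∑ i ∈ Finset.range p,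
        ((PowerSeries.mk fun j => (frobeniusEquiv k p).symm (PowerSeries.coeff (p*j+i) f)) ^ p
          * ((i : PowerSeries k) * PowerSeries.X ^ (i-1)))) * E PowerSeries.X := by
    intro E
    conv_lhs => rw [decomp (p := p) f]
    rw [map_sum, Finset.sum_mul]
    refine Finset.sum_congr rfl fun i _ => ?_
    set b := (PowerSeries.mk fun j => (frobeniusEquiv k p).symm (PowerSeries.coeff (p*j+i) f))
    have hbp : E (b ^ p) = 0 := by
      rw [Derivation.leibniz_pow, ← Nat.cast_smul_eq_nsmul (PowerSeries k), hp0, zero_smul]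
    rw [Derivation.leibniz, hbp, smul_zero, add_zero, Derivation.leibniz_pow,
      ← Nat.cast_smul_eq_nsmul (PowerSeries k)]
    simp only [smul_eq_mul]
    ring
  have h1 := key D
  have h2 := key (PowerSeries.derivative k)
  rw [PowerSeries.derivative_X, mul_one] at h2
  rw [h1, ← h2]

theorem chain_rule {p : ℕ} [Fact p.Prime] {k : Type} [Field k] [CharP k p] [PerfectField k]
    (σ : PowerSeries k ≃ₐ[k] PowerSeries k) (f : PowerSeries k) :
    PowerSeries.derivative k (σ f)
      = σ (PowerSeries.derivative k f) * PowerSeries.derivative k (σ PowerSeries.X) := by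
  set D : Derivation k (PowerSeries k) (PowerSeries k) :=
    Derivation.mk' (σ.symm.toLinearMap ∘ₗ (PowerSeries.derivative k).toLinearMap ∘ₗ σ.toLinearMap)
      (by
        intro a b
        simp only [LinearMap.coe_comp, Function.comp_apply, AlgEquiv.toLinearMap_apply,
          Derivation.coeFn_coe, map_mul, Derivation.leibniz, smul_eq_mul, map_add]
        simp only [AlgEquiv.symm_apply_apply]) with hD
  have h := derivation_eq_derivative (p := p) D f
  have hDapp : ∀ x, D x = σ.symm (PowerSeries.derivative k (σ x)) := fun x => rfl
  rw [hDapp, hDapp] at h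
  have := congrArg σ h
  rw [AlgEquiv.apply_symm_apply, map_mul, AlgEquiv.apply_symm_apply] at this
  exact this

variable {k : Type} [Field k]

variable {k : Type} [Field k]

theorem toL_mul (x y : PowerSeries k) : toL (x * y) = toL x * toL y := map_mul _ x y
theorem toL_add (x y : PowerSeries k) : toL (x + y) = toL x + toL y := map_add _ x y
theorem toL_zero : toL (0 : PowerSeries k) = 0 := map_zero (HahnSeries.ofPowerSeries ℤ k)
theorem toL_inj {x y : PowerSeries k} (h : toL x = toL y) : x = y :=
  HahnSeries.ofPowerSeries_injective h
theorem toL_ne_zero {x : PowerSeries k} (hx : x ≠ 0) : toL x ≠ 0 := fun h =>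
  hx (toL_inj (h.trans toL_zero.symm))

theorem toL_coeff (x : PowerSeries k) (i : ℤ) :
    (toL x).coeff i = if i < 0 then 0 else PowerSeries.coeff i.natAbs x :=
  PowerSeries.coeff_coe x i

theorem orderTop_toL {x : PowerSeries k} {d : ℕ} (h : x.order = (d : ℕ∞)) :
    (toL x).orderTop = (d : ℤ) := by
  have hx : x ≠ 0 := by
    rw [← PowerSeries.order_finite_iff_ne_zero, h]; exact WithTop.coe_lt_top _
  apply HahnSeries.orderTop_eq_of_le
  · rw [HahnSeries.mem_support, toL_coeff, if_neg (by omega)]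
    simpa using (PowerSeries.order_eq_nat.mp h).1
  · intro g' hg'
    rw [HahnSeries.mem_support, toL_coeff] at hg'
    split_ifs at hg' with hneg
    · exact absurd rfl hg'
    · push_neg at hneg
      have := PowerSeries.order_le (φ := x) _ hg'
      rw [h, Nat.cast_le] at this
      omega

theorem order_toL {x : PowerSeries k} {d : ℕ} (h : x.order = (d : ℕ∞)) :
    (toL x).order = (d : ℤ) := by
  have hx : x ≠ 0 := by
    rw [← PowerSeries.order_finite_iff_ne_zero, h]; exact WithTop.coe_lt_top _
  have h2 := orderTop_toL h
  rw [← HahnSeries.order_eq_orderTop_of_ne_zero (toL_ne_zero hx)] at h2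
  exact_mod_cast h2

theorem ordGE_iff {x : LaurentSeries k} {n : ℤ} :
    ordGE x n ↔ (n : WithTop ℤ) ≤ x.orderTop := by
  constructor
  · rintro (rfl | h)
    · simp [HahnSeries.orderTop_zero]
    · by_cases hx : x = 0
      · simp [hx, HahnSeries.orderTop_zero]
      · rw [← HahnSeries.order_eq_orderTop_of_ne_zero hx]
        exact_mod_cast h
  · intro h
    by_cases hx : x = 0
    · exact Or.inl hx
    · refine Or.inr ?_
      rw [← HahnSeries.order_eq_orderTop_of_ne_zero hx] at h
      exact_mod_cast h

theorem ordGE_mono {x : LaurentSeries k} {n m : ℤ} (h : ordGE x n) (hm : m ≤ n) : ordGE x m := by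
  rw [ordGE_iff] at h ⊢
  exact le_trans (by exact_mod_cast hm) h

theorem ordGE_zero_left {n : ℤ} : ordGE (0 : LaurentSeries k) n := Or.inl rfl

theorem ordGE_neg {x : LaurentSeries k} {n : ℤ} (h : ordGE x n) : ordGE (-x) n := by
  rw [ordGE_iff] at h ⊢; rwa [HahnSeries.orderTop_neg]

theorem ordGE_add {x y : LaurentSeries k} {n : ℤ} (hx : ordGE x n) (hy : ordGE y n) :
    ordGE (x + y) n := by
  rw [ordGE_iff] at hx hy ⊢
  exact le_trans (le_min hx hy) HahnSeries.min_orderTop_le_orderTop_add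

theorem ordGE_sub {x y : LaurentSeries k} {n : ℤ} (hx : ordGE x n) (hy : ordGE y n) :
    ordGE (x - y) n := by
  rw [sub_eq_add_neg]; exact ordGE_add hx (ordGE_neg hy)

theorem ordGE_mul {x y : LaurentSeries k} {a b : ℤ} (hx : ordGE x a) (hy : ordGE y b) :
    ordGE (x * y) (a + b) := by
  rw [ordGE_iff] at hx hy ⊢
  refine le_trans ?_ (HahnSeries.orderTop_mul x y).ge
  rw [WithTop.coe_add]
  exact add_le_add hx hy

theorem ordGE_sum {ι : Type*} {F : Finset ι} {f : ι → LaurentSeries k} {n : ℤ}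
    (h : ∀ i ∈ F, ordGE (f i) n) : ordGE (∑ i ∈ F, f i) n := by
  classical
  induction F using Finset.induction_on with
  | empty => simpa using ordGE_zero_left
  | insert _ _ hx ih =>
    rw [Finset.sum_insert hx]
    exact ordGE_add (h _ (Finset.mem_insert_self _ _))
      (ih fun i hi => h i (Finset.mem_insert_of_mem hi))

theorem ordGE_toL {x : PowerSeries k} {d : ℕ} (h : (d : ℕ∞) ≤ x.order) :
    ordGE (toL x) (d : ℤ) := by
  rw [ordGE_iff]
  by_cases hx : x = 0
  · simp [hx, toL_zero, HahnSeries.orderTop_zero]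
  · obtain ⟨m, hm⟩ : ∃ m : ℕ, x.order = (m : ℕ∞) := by
      have := PowerSeries.order_finite_iff_ne_zero.mpr hx
      lift x.order to ℕ using this.ne with m hm
      exact ⟨m, rfl⟩
    rw [orderTop_toL hm]
    rw [hm, Nat.cast_le] at h
    exact_mod_cast h

theorem ordGE_toL_zero (x : PowerSeries k) : ordGE (toL x) 0 := by
  have := ordGE_toL (x := x) (d := 0) (by simp)
  simpa using this

theorem ordGE_inv {x : PowerSeries k} {d : ℕ} (hx : x ≠ 0) (h : x.order = (d : ℕ∞)) :
    ordGE (toL x)⁻¹ (-(d : ℤ)) := by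
  have hT : toL x ≠ 0 := toL_ne_zero hx
  have hI : (toL x)⁻¹ ≠ 0 := inv_ne_zero hT
  refine Or.inr ?_
  have hmul := HahnSeries.order_mul hT hI
  rw [mul_inv_cancel₀ hT, HahnSeries.order_one, order_toL h] at hmul
  omega


theorem order_le_order_sigma (σ : PowerSeries k ≃ₐ[k] PowerSeries k) (x : PowerSeries k) :
    x.order ≤ (σ x).order := by
  by_cases hx : x = 0
  · simp [hx]
  -- constant coefficient of σ X is 0
  have hcc : PowerSeries.constantCoeff (σ PowerSeries.X) = 0 := by
    by_contra hne
    have hu : IsUnit (σ PowerSeries.X) :=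
      PowerSeries.isUnit_iff_constantCoeff.mpr (isUnit_iff_ne_zero.mpr hne)
    have : IsUnit (PowerSeries.X : PowerSeries k) := by
      have := hu.map (σ.symm : PowerSeries k →ₐ[k] PowerSeries k)
      simpa using this
    have := PowerSeries.isUnit_iff_constantCoeff.mp this
    simp at this
  have hordX : (1 : ℕ∞) ≤ (σ PowerSeries.X).order := by
    have := PowerSeries.nat_le_order (σ PowerSeries.X) 1 (fun i hi => by
      interval_cases i
      · simpa using hcc)
    simpa using this
  obtain ⟨m, hm⟩ : ∃ m : ℕ, x.order = (m : ℕ∞) := by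
    lift x.order to ℕ using (PowerSeries.order_finite_iff_ne_zero.mpr hx).ne with m hm
    exact ⟨m, rfl⟩
  rw [hm]
  -- x = X^m * y
  have hdvd : (PowerSeries.X : PowerSeries k) ^ m ∣ x := by
    rw [PowerSeries.X_pow_dvd_iff]
    intro i hi
    exact PowerSeries.coeff_of_lt_order i (by rw [hm]; exact_mod_cast hi)
  obtain ⟨y, hy⟩ := hdvd
  have hpow : ∀ j : ℕ, (j : ℕ∞) ≤ ((σ PowerSeries.X) ^ j).order := by
    intro j
    induction j with
    | zero => simp
    | succ n ih =>
      rw [pow_succ, PowerSeries.order_mul]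
      calc ((n+1 : ℕ) : ℕ∞) = (n : ℕ∞) + 1 := by push_cast; ring
      _ ≤ _ := add_le_add ih hordX
  calc (m : ℕ∞) ≤ ((σ PowerSeries.X) ^ m).order := hpow m
  _ ≤ ((σ PowerSeries.X) ^ m).order + (σ y).order := le_self_add
  _ = (σ x).order := by rw [← PowerSeries.order_mul, ← map_pow, ← map_mul, ← hy]

theorem order_sigma (σ : PowerSeries k ≃ₐ[k] PowerSeries k) (x : PowerSeries k) :
    (σ x).order = x.order := by
  refine le_antisymm ?_ (order_le_order_sigma σ x)
  have := order_le_order_sigma σ.symm (σ x)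
  simpa using this

theorem logderiv_prod {ι : Type} (F : Finset ι) (h : ι → PowerSeries k)
    (hh : ∀ i ∈ F, h i ≠ 0) :
    toL (PowerSeries.derivative k (∏ i ∈ F, h i)) * (toL (∏ i ∈ F, h i))⁻¹
      = ∑ i ∈ F, toL (PowerSeries.derivative k (h i)) * (toL (h i))⁻¹ := by
  classical
  induction F using Finset.induction_on with
  | empty => simp [toL_zero]
  | @insert a F ha ih =>
    rw [Finset.prod_insert ha, Finset.sum_insert ha,
      ← ih (fun i hi => hh i (Finset.mem_insert_of_mem hi))]
    have hha : h a ≠ 0 := hh a (Finset.mem_insert_self _ _)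
    have hP : (∏ i ∈ F, h i) ≠ 0 :=
      Finset.prod_ne_zero_iff.mpr (fun i hi => hh i (Finset.mem_insert_of_mem hi))
    have hd : PowerSeries.derivative k (h a * ∏ i ∈ F, h i)
        = h a * PowerSeries.derivative k (∏ i ∈ F, h i)
          + (∏ i ∈ F, h i) * PowerSeries.derivative k (h a) := by
      rw [Derivation.leibniz]; simp [smul_eq_mul]
    rw [hd, toL_add, toL_mul, toL_mul, toL_mul]
    have h1 : toL (h a) ≠ 0 := toL_ne_zero hha
    have h2 : toL (∏ i ∈ F, h i) ≠ 0 := toL_ne_zero hP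
    field_simp
    ring

theorem key1 {L : Type} [Field L] (A W W' E T : L) (hE : E ≠ 0) (hW' : W' ≠ 0) :
    -(A * E⁻¹ * W * (W' * E⁻¹)⁻¹ * T) = -(A * W * W'⁻¹ * T) := by
  field_simp

theorem key2 {L : Type} [Field L] (A B Y W W' U S T : L)
    (hB : B ≠ 0) (hW : W ≠ 0) (hW' : W' ≠ 0) :
    A * B⁻¹ * (W * (B * W'⁻¹) * (W' * W⁻¹ * U + T) - Y * S)
      = A * U - (-(A * W * W'⁻¹ * T) - -(A * Y * B⁻¹ * S)) := by
  field_simp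
  ring

end St14

/-- Let `c : G → Der` be a `1`-cocycle and `D` the `1`-cocycle of
`G/N` with values in `Der_k(k[[y_N]])` determined by `D_ḡ(y_N) =
ρ(g)(y_N)·(y_N'/(ρ(g)(y_N))')·Σ_{s∈N} c_{gs}(f_{gs})/f_{gs} − y_N·Σ_{s∈N} c_s(f_s)/f_s`.
Then there is `α ∈ k((t))` with `ord(α) ≥ ord(y_G') − ord(y_N')` such that
`ρ(g)(α) − α = c_g(y_G) − D_{gN}(y_G)` for all `g ∈ G`; consequently the two
`1`-cocycles `g ↦ c_g(y_G)` and `g ↦ D_{gN}(y_G)` with values in the ideal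
`(y_G'/y_N')·k[[t]]` define the same cohomology class.
(Here `D_{gN}(y_G) = (y_G'/y_N')·D_{gN}(y_N)` by the chain rule.) -/
theorem statement14
    (p : ℕ) [Fact p.Prime]
    (k : Type) [Field k] [CharP k p] [PerfectField k]
    (G : Type) [Group G] [Fintype G]
    (ρ : G →* (PowerSeries k ≃ₐ[k] PowerSeries k)) (hρ : Function.Injective ρ)
    (ρL : G →* (LaurentSeries k ≃ₐ[k] LaurentSeries k))
    (hρL : ∀ g x, ρL g (toL x) = toL (ρ g x))
    (N : Subgroup G) (hN : N.Normal) [DecidablePred (· ∈ N)]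
    (yN yG : PowerSeries k)
    (hyN : yN = ∏ s ∈ Finset.univ.filter (· ∈ N), ρ s PowerSeries.X)
    (hyG : yG = ∏ g : G, ρ g PowerSeries.X)
    (dG dN : ℕ)
    (hdG : (PowerSeries.derivative k yG).order = (dG : ℕ∞))
    (hdN : (PowerSeries.derivative k yN).order = (dN : ℕ∞))
    (c : G → Derivation k (PowerSeries k) (PowerSeries k))
    (hc : ∀ g h : G, ∀ x, c (g * h) x = c g x + ρ g (c h (ρ g⁻¹ x)))
    -- `DyG g = D_{gN}(y_G)`, expressed via the chain rule through `y_N`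
    (DyG : G → LaurentSeries k)
    (hDyG : ∀ g : G, DyG g =
      toL (PowerSeries.derivative k yG) * (toL (PowerSeries.derivative k yN))⁻¹ *
        (toL (ρ g yN) *
          (toL (PowerSeries.derivative k yN) *
            (toL (PowerSeries.derivative k (ρ g yN)))⁻¹) *
          (∑ s ∈ Finset.univ.filter (· ∈ N),
            toL (c (g * s) (ρ (g * s) PowerSeries.X)) * (toL (ρ (g * s) PowerSeries.X))⁻¹) -
        toL yN *
          ∑ s ∈ Finset.univ.filter (· ∈ N),
            toL (c s (ρ s PowerSeries.X)) * (toL (ρ s PowerSeries.X))⁻¹)) :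
    -- the two cocycles take values in the ideal `(y_G'/y_N')·k[[t]]` …
    (∀ g : G, ordGE (toL (c g yG)) ((dG : ℤ) - (dN : ℤ)) ∧
      ordGE (DyG g) ((dG : ℤ) - (dN : ℤ))) ∧
    -- … and differ by the coboundary of an element `α` of this ideal
    (∃ α : LaurentSeries k, ordGE α ((dG : ℤ) - (dN : ℤ)) ∧
      ∀ g : G, ρL g α - α = toL (c g yG) - DyG g) := by
  classical
  open St14 in
  set F : Finset G := Finset.univ.filter (· ∈ N) with hF
  set S : LaurentSeries k :=
    ∑ s ∈ F, toL (c s (ρ s PowerSeries.X)) * (toL (ρ s PowerSeries.X))⁻¹ with hS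
  set α : LaurentSeries k :=
    -(toL (PowerSeries.derivative k yG) * toL yN *
      (toL (PowerSeries.derivative k yN))⁻¹ * S) with hα
  -- group action basics
  have hρmul : ∀ (a b : G) (x : PowerSeries k), ρ (a * b) x = ρ a (ρ b x) := by
    intro a b x; rw [map_mul, AlgEquiv.mul_apply]
  have hρone : ∀ x : PowerSeries k, ρ (1 : G) x = x := by
    intro x; rw [map_one, AlgEquiv.one_apply]
  -- nonvanishing
  have hfs0 : ∀ s : G, ρ s PowerSeries.X ≠ 0 := by
    intro s h
    have := congrArg (ρ s).symm h
    simp only [AlgEquiv.symm_apply_apply, map_zero] at this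
    exact PowerSeries.X_ne_zero this
  have hord_fs : ∀ s : G, (ρ s PowerSeries.X).order = ((1:ℕ) : ℕ∞) := by
    intro s; rw [order_sigma]; simpa using PowerSeries.order_X
  have hdyG0 : PowerSeries.derivative k yG ≠ 0 := by
    rw [← PowerSeries.order_finite_iff_ne_zero, hdG]; exact WithTop.coe_lt_top _
  have hdyN0 : PowerSeries.derivative k yN ≠ 0 := by
    rw [← PowerSeries.order_finite_iff_ne_zero, hdN]; exact WithTop.coe_lt_top _
  have hyN0 : yN ≠ 0 := by
    intro h; exact hdyN0 (by rw [h, map_zero])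
  -- derivations are multiples of d/dt
  have hCder : ∀ (g : G) (x : PowerSeries k),
      c g x = PowerSeries.derivative k x * c g PowerSeries.X := fun g x =>
    derivation_eq_derivative (p := p) (c g) x
  -- chain rule
  have hchain : ∀ (g : G) (x : PowerSeries k),
      PowerSeries.derivative k (ρ g x)
        = ρ g (PowerSeries.derivative k x) * PowerSeries.derivative k (ρ g PowerSeries.X) :=
    fun g x => chain_rule (p := p) (ρ g) x
  have he1 : ∀ g : G, ρ g (PowerSeries.derivative k (ρ g⁻¹ PowerSeries.X))
      * PowerSeries.derivative k (ρ g PowerSeries.X) = 1 := by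
    intro g
    have h0 : ρ g (ρ g⁻¹ PowerSeries.X) = PowerSeries.X := by
      rw [← hρmul, mul_inv_cancel, hρone]
    have h1 := hchain g (ρ g⁻¹ PowerSeries.X)
    rw [h0, PowerSeries.derivative_X] at h1
    exact h1.symm
  have heord : ∀ g : G, (PowerSeries.derivative k (ρ g PowerSeries.X)).order = 0 := by
    intro g
    have h1 := congrArg PowerSeries.order (he1 g)
    rw [PowerSeries.order_mul, PowerSeries.order_one] at h1
    exact (add_eq_zero.mp h1).2
  have he0 : ∀ g : G, PowerSeries.derivative k (ρ g PowerSeries.X) ≠ 0 := by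
    intro g
    rw [← PowerSeries.order_finite_iff_ne_zero, heord g]
    exact (WithTop.coe_lt_top 0)
  -- invariance of yG
  have hyGfix : ∀ g : G, ρ g yG = yG := by
    intro g
    rw [hyG, map_prod]
    calc ∏ h : G, ρ g (ρ h PowerSeries.X) = ∏ h : G, ρ (g * h) PowerSeries.X :=
          Finset.prod_congr rfl fun h _ => (hρmul g h _).symm
    _ = ∏ h : G, ρ h PowerSeries.X := Equiv.prod_comp (Equiv.mulLeft g) fun h => ρ h PowerSeries.X
  have hwprod : ∀ g : G, ρ g yN = ∏ s ∈ F, ρ (g * s) PowerSeries.X := by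
    intro g
    rw [hyN, map_prod]
    exact Finset.prod_congr rfl fun s _ => (hρmul g s _).symm
  have hword : ∀ g : G, (PowerSeries.derivative k (ρ g yN)).order = (dN : ℕ∞) := by
    intro g
    rw [hchain g yN, PowerSeries.order_mul, order_sigma, hdN, heord g, add_zero]
  have hw'0 : ∀ g : G, PowerSeries.derivative k (ρ g yN) ≠ 0 := by
    intro g
    rw [← PowerSeries.order_finite_iff_ne_zero, hword g]; exact WithTop.coe_lt_top _
  have hordyN1 : ((1:ℕ) : ℕ∞) ≤ yN.order := by
    apply PowerSeries.nat_le_order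
    intro i hi
    interval_cases i
    rw [PowerSeries.coeff_zero_eq_constantCoeff, hyN, map_prod]
    refine Finset.prod_eq_zero (i := (1 : G)) ?_ ?_
    · simp [hF, N.one_mem]
    · rw [hρone]; exact PowerSeries.constantCoeff_X
  -- cocycle computation, term by term
  have hterm : ∀ g s : G,
      toL (c (g * s) (ρ (g * s) PowerSeries.X)) * (toL (ρ (g * s) PowerSeries.X))⁻¹
      = toL (PowerSeries.derivative k (ρ (g * s) PowerSeries.X))
          * (toL (ρ (g * s) PowerSeries.X))⁻¹ * toL (c g PowerSeries.X)
        + ρL g (toL (c s (ρ s PowerSeries.X)) * (toL (ρ s PowerSeries.X))⁻¹) := by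
    intro g s
    have h2 : ρ g⁻¹ (ρ (g * s) PowerSeries.X) = ρ s PowerSeries.X := by
      rw [← hρmul, inv_mul_cancel_left]
    have h1 : c (g * s) (ρ (g * s) PowerSeries.X)
        = PowerSeries.derivative k (ρ (g * s) PowerSeries.X) * c g PowerSeries.X
          + ρ g (c s (ρ s PowerSeries.X)) := by
      rw [hc g s (ρ (g * s) PowerSeries.X), h2, ← hCder g]
    rw [h1, toL_add, add_mul, toL_mul]
    have hx : toL (ρ g (c s (ρ s PowerSeries.X))) * (toL (ρ (g * s) PowerSeries.X))⁻¹
        = ρL g (toL (c s (ρ s PowerSeries.X)) * (toL (ρ s PowerSeries.X))⁻¹) := by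
      rw [map_mul (ρL g), map_inv₀ (ρL g), hρL, hρL, ← hρmul]
    rw [hx]
    ring
  have hSg : ∀ g : G,
      (∑ s ∈ F, toL (c (g * s) (ρ (g * s) PowerSeries.X))
          * (toL (ρ (g * s) PowerSeries.X))⁻¹)
      = toL (PowerSeries.derivative k (ρ g yN)) * (toL (ρ g yN))⁻¹ * toL (c g PowerSeries.X)
          + ρL g S := by
    intro g
    rw [Finset.sum_congr rfl fun s _ => hterm g s, Finset.sum_add_distrib, ← Finset.sum_mul,
      ← map_sum (ρL g) _ F]
    congr 1
    rw [← logderiv_prod F (fun s => ρ (g * s) PowerSeries.X) (fun s _ => hfs0 (g * s)),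
      ← hwprod g]
  -- chain-rule consequences in the Laurent field
  have hAeq : ∀ g : G, toL (ρ g (PowerSeries.derivative k yG))
      = toL (PowerSeries.derivative k yG)
        * (toL (PowerSeries.derivative k (ρ g PowerSeries.X)))⁻¹ := by
    intro g
    have h1 := hchain g yG
    rw [hyGfix g] at h1
    have h2 := congrArg toL h1
    rw [toL_mul] at h2
    rw [eq_comm, mul_inv_eq_iff_eq_mul₀ (toL_ne_zero (he0 g))]
    exact h2
  have hBeq : ∀ g : G, toL (ρ g (PowerSeries.derivative k yN))
      = toL (PowerSeries.derivative k (ρ g yN))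
        * (toL (PowerSeries.derivative k (ρ g PowerSeries.X)))⁻¹ := by
    intro g
    have h2 := congrArg toL (hchain g yN)
    rw [toL_mul] at h2
    rw [eq_comm, mul_inv_eq_iff_eq_mul₀ (toL_ne_zero (he0 g))]
    exact h2
  have hρα : ∀ g : G, ρL g α
      = -(toL (PowerSeries.derivative k yG) * toL (ρ g yN)
          * (toL (PowerSeries.derivative k (ρ g yN)))⁻¹ * ρL g S) := by
    intro g
    rw [hα, map_neg (ρL g), map_mul (ρL g), map_mul (ρL g), map_mul (ρL g), map_inv₀ (ρL g), hρL, hρL, hρL, hAeq g, hBeq g]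
    exact key1 _ _ _ _ _ (toL_ne_zero (he0 g)) (toL_ne_zero (hw'0 g))
  have hDyGeq : ∀ g : G, DyG g = toL (c g yG) - (ρL g α - α) := by
    intro g
    rw [hDyG g, hSg g, hρα g, hCder g yG, toL_mul, hα]
    have hB := toL_ne_zero hdyN0
    have hW' := toL_ne_zero (hw'0 g)
    have hW : toL (ρ g yN) ≠ 0 := by
      apply toL_ne_zero
      intro h
      have := congrArg (ρ g).symm h
      simp only [AlgEquiv.symm_apply_apply, map_zero] at this
      exact hyN0 this
    exact key2 _ _ _ _ _ _ _ _ hB hW hW'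
  -- order bounds
  have hAord : ordGE (toL (PowerSeries.derivative k yG)) (dG : ℤ) :=
    ordGE_toL (le_of_eq hdG.symm)
  have hSord : ordGE S (-1) := by
    apply ordGE_sum
    intro s _
    have := ordGE_mul (ordGE_toL_zero (c s (ρ s PowerSeries.X)))
      (ordGE_inv (hfs0 s) (hord_fs s))
    simpa using this
  have hαord : ordGE α ((dG : ℤ) - (dN : ℤ)) := by
    rw [hα]
    apply ordGE_neg
    have h1 := ordGE_mul (ordGE_mul (ordGE_mul hAord (ordGE_toL hordyN1))
      (ordGE_inv hdyN0 hdN)) hSord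
    exact ordGE_mono h1 (by push_cast; omega)
  have hρSord : ∀ g : G, ordGE (ρL g S) (-1) := by
    intro g
    rw [hS, map_sum]
    apply ordGE_sum
    intro s _
    rw [map_mul (ρL g), map_inv₀ (ρL g), hρL, hρL, ← hρmul]
    have := ordGE_mul (ordGE_toL_zero (ρ g (c s (ρ s PowerSeries.X))))
      (ordGE_inv (hfs0 (g * s)) (hord_fs (g * s)))
    simpa using this
  have hραord : ∀ g : G, ordGE (ρL g α) ((dG : ℤ) - (dN : ℤ)) := by
    intro g
    rw [hρα g]
    apply ordGE_neg
    have hWord : ((1:ℕ) : ℕ∞) ≤ (ρ g yN).order := by rw [order_sigma]; exact hordyN1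
    have h1 := ordGE_mul (ordGE_mul (ordGE_mul hAord (ordGE_toL hWord))
      (ordGE_inv (hw'0 g) (hword g))) (hρSord g)
    exact ordGE_mono h1 (by push_cast; omega)
  have h1g : ∀ g : G, ordGE (toL (c g yG)) ((dG : ℤ) - (dN : ℤ)) := by
    intro g
    rw [hCder g yG, toL_mul]
    have h1 := ordGE_mul hAord (ordGE_toL_zero (c g PowerSeries.X))
    exact ordGE_mono h1 (by omega)
  refine ⟨fun g => ⟨h1g g, ?_⟩, α, hαord, fun g => by rw [hDyGeq g]; ring⟩
  rw [hDyGeq g]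
  exact ordGE_sub (h1g g) (ordGE_sub (hραord g) hαord)
end

section
/- Let N be a normal subgroup of G. Set 𝔡 := y_G'·k[[t]] and 𝔡₁ := (y_G'/y_N')·k[[t]], both G-stable subgroups of k((t)) under the action x ↦ ρ(g)(x), and let 𝔡^N, 𝔡₁^N denote their N-fixed parts. Let c : N → 𝔡 be a 1-cocycle (c_{st} = c_s + ρ(s)(c_t)) whose class is G/N-invariant, i.e. for each g ∈ G there exists b_g ∈ 𝔡 with ρ(g)(c_{g^{-1}sg}) = c_s + ρ(s)(b_g) − b_g for all s ∈ N. Then: (i) there exists α ∈ 𝔡₁ with ρ(s)(α) − α = c_s for all s ∈ N; (ii) for any such α and any g ∈ G, ρ(g)(α) − α ∈ 𝔡₁^N + 𝔡; (iii) writing ρ(g)(α) − α = a_g + b_g with a_g ∈ 𝔡₁^N and b_g ∈ 𝔡, the coset a_g + 𝔡^N ∈ 𝔡₁^N/𝔡^N is independent of the chosen decomposition, depends only on the coset gN, and the map gN ↦ a_g + 𝔡^N is a 1-cocycle of G/N with values in 𝔡₁^N/𝔡^N (with the action induced by x ↦ ρ(g)(x)); moreover its cohomology class in H^1(G/N, 𝔡₁^N/𝔡^N)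 does not depend on the choice of α. -/
open PowerSeries

namespace Stmt15

variable {k : Type} [Field k]


lemma toL_injective : Function.Injective (toL (k := k)) :=
  HahnSeries.ofPowerSeries_injective

@[simp] lemma toL_zero : toL (0 : PowerSeries k) = 0 := map_zero (HahnSeries.ofPowerSeries ℤ k)

@[simp] lemma toL_one : toL (1 : PowerSeries k) = 1 := map_one (HahnSeries.ofPowerSeries ℤ k)

@[simp] lemma toL_mul (x y : PowerSeries k) : toL (x * y) = toL x * toL y :=
  map_mul (HahnSeries.ofPowerSeries ℤ k) x y

lemma toL_sum {ι : Type*} (s : Finset ι) (f : ι → PowerSeries k) :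
    toL (∑ i ∈ s, f i) = ∑ i ∈ s, toL (f i) :=
  map_sum (HahnSeries.ofPowerSeries ℤ k) f s

@[simp] lemma toL_eq_zero {x : PowerSeries k} : toL x = 0 ↔ x = 0 := by
  constructor
  · intro h
    exact toL_injective (by simpa using h)
  · rintro rfl; simp

lemma toL_coeff (x : PowerSeries k) (n : ℕ) :
    (toL x).coeff (n : ℤ) = PowerSeries.coeff n x :=
  HahnSeries.ofPowerSeries_apply_coeff x n

lemma toL_coeff_neg (x : PowerSeries k) {i : ℤ} (hi : i < 0) : (toL x).coeff i = 0 := by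
  have : (toL x).coeff i = if i < 0 then 0 else PowerSeries.coeff i.natAbs x :=
    PowerSeries.coeff_coe x i
  rw [this, if_pos hi]

lemma order_toL {x : PowerSeries k} {n : ℕ} (h : x.order = (n : ℕ∞)) :
    (toL x).order = (n : ℤ) := by
  have hx : x ≠ 0 := by
    intro h0; rw [h0, PowerSeries.order_zero] at h; exact (ENat.coe_ne_top n) h.symm
  have hL : toL x ≠ 0 := by simpa using hx
  have h1 : (toL x).order ≤ (n : ℤ) := by
    apply HahnSeries.order_le_of_coeff_ne_zero
    rw [toL_coeff]
    exact ((PowerSeries.order_eq_nat).mp h).1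
  have h2 : ¬ (toL x).order < (n : ℤ) := by
    intro hlt
    have hc := HahnSeries.coeff_order_eq_zero.not.mpr hL
    rcases lt_or_ge (toL x).order 0 with hneg | hpos
    · exact hc (toL_coeff_neg x hneg)
    · obtain ⟨m, hm⟩ := Int.eq_ofNat_of_zero_le hpos
      apply hc
      rw [hm, toL_coeff]
      apply PowerSeries.coeff_of_lt_order
      rw [h]
      exact_mod_cast (by omega : m < n)
  omega

lemma ordGE_toL (x : PowerSeries k) : ordGE (toL x) 0 := by
  by_cases hx : toL x = 0
  · exact Or.inl hx
  · right
    by_contra hlt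
    exact HahnSeries.coeff_order_eq_zero.not.mpr hx (toL_coeff_neg x (by omega))

lemma ordGE_zero (n : ℤ) : ordGE (0 : LaurentSeries k) n := Or.inl rfl

lemma ordGE_mono {x : LaurentSeries k} {n m : ℤ} (h : ordGE x n) (hmn : m ≤ n) : ordGE x m :=
  h.imp id fun h' => le_trans hmn h'

lemma ordGE_add {x y : LaurentSeries k} {n : ℤ} (hx : ordGE x n) (hy : ordGE y n) :
    ordGE (x + y) n := by
  rcases hx with rfl | hx
  · simpa using hy
  rcases hy with rfl | hy
  · rw [add_zero]; exact Or.inr hx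
  by_cases hxy : x + y = 0
  · exact Or.inl hxy
  · exact Or.inr (le_trans (le_min hx hy) (HahnSeries.min_order_le_order_add hxy))

lemma ordGE_neg {x : LaurentSeries k} {n : ℤ} (hx : ordGE x n) : ordGE (-x) n := by
  rcases hx with rfl | hx
  · simp [ordGE_zero]
  · exact Or.inr (by rwa [HahnSeries.order_neg])

lemma ordGE_sub {x y : LaurentSeries k} {n : ℤ} (hx : ordGE x n) (hy : ordGE y n) :
    ordGE (x - y) n := by
  rw [sub_eq_add_neg]; exact ordGE_add hx (ordGE_neg hy)

lemma ordGE_mul {x y : LaurentSeries k} {m n : ℤ} (hx : ordGE x m) (hy : ordGE y n) :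
    ordGE (x * y) (m + n) := by
  rcases hx with rfl | hx
  · simp [ordGE_zero]
  rcases hy with rfl | hy
  · simp [ordGE_zero]
  by_cases h0 : x = 0
  · simp [h0, ordGE_zero]
  by_cases h1 : y = 0
  · simp [h1, ordGE_zero]
  · exact Or.inr (by rw [HahnSeries.order_mul h0 h1]; exact add_le_add hx hy)

lemma ordGE_sum {ι : Type*} (s : Finset ι) (f : ι → LaurentSeries k) (n : ℤ)
    (h : ∀ i ∈ s, ordGE (f i) n) : ordGE (∑ i ∈ s, f i) n := by
  classical
  induction s using Finset.induction_on with
  | empty => simpa using ordGE_zero n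
  | insert _ _ ha ih =>
    rw [Finset.sum_insert ha]
    exact ordGE_add (h _ (Finset.mem_insert_self _ _))
      (ih fun i hi => h i (Finset.mem_insert_of_mem hi))

lemma order_inv {x : LaurentSeries k} (hx : x ≠ 0) : (x⁻¹).order = -x.order := by
  have h := HahnSeries.order_mul hx (inv_ne_zero hx)
  rw [mul_inv_cancel₀ hx, HahnSeries.order_one] at h
  omega

lemma exists_toL {f : LaurentSeries k} (hf : 0 ≤ f.order) : ∃ x : PowerSeries k, toL x = f :=
  ⟨X ^ f.order.toNat * f.powerSeriesPart,
    LaurentSeries.X_order_mul_powerSeriesPart (by simp [Int.toNat_of_nonneg hf])⟩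



lemma constantCoeff_apply_X (φ : PowerSeries k ≃ₐ[k] PowerSeries k) :
    constantCoeff (φ X) = 0 := by
  by_contra h
  have hu : IsUnit (φ X) := isUnit_iff_constantCoeff.mpr (isUnit_iff_ne_zero.mpr h)
  have hX : IsUnit (X : PowerSeries k) := by
    have := hu.map φ.symm
    rwa [AlgEquiv.symm_apply_apply] at this
  have := isUnit_iff_constantCoeff.mp hX
  rw [constantCoeff_X] at this
  exact (isUnit_iff_ne_zero.mp this) rfl

lemma X_pow_dvd_map (φ : PowerSeries k ≃ₐ[k] PowerSeries k) (n : ℕ) {x : PowerSeries k}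
    (h : X ^ n ∣ x) : X ^ n ∣ φ x := by
  obtain ⟨y, rfl⟩ := h
  obtain ⟨z, hz⟩ := X_dvd_iff.mpr (constantCoeff_apply_X φ)
  rw [map_mul, map_pow, hz]
  exact ⟨z ^ n * φ y, by ring⟩

lemma order_le_map (φ : PowerSeries k ≃ₐ[k] PowerSeries k) (x : PowerSeries k) :
    x.order ≤ (φ x).order := by
  by_cases hx : x = 0
  · simp [hx]
  have hlt : x.order < ⊤ := PowerSeries.order_finite_iff_ne_zero.mpr hx
  set n := x.order.lift hlt with hn
  have hxn : x.order = (n : ℕ∞) := by simp [hn]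
  have hd0 : X ^ n ∣ x := by
    have := X_pow_order_dvd (φ := x); rwa [hxn, ENat.toNat_coe] at this
  have hd : X ^ n ∣ φ x := X_pow_dvd_map φ n hd0
  calc x.order = (n : ℕ∞) := hxn
    _ ≤ (φ x).order := PowerSeries.nat_le_order _ _ (fun i hi => X_pow_dvd_iff.mp hd i hi)

lemma order_map (φ : PowerSeries k ≃ₐ[k] PowerSeries k) (x : PowerSeries k) :
    (φ x).order = x.order := by
  refine le_antisymm ?_ (order_le_map φ x)
  have := order_le_map φ.symm (φ x)
  rwa [AlgEquiv.symm_apply_apply] at this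

lemma map_poly (φ : PowerSeries k ≃ₐ[k] PowerSeries k) (P : Polynomial k) :
    φ (P : PowerSeries k) = Polynomial.aeval (φ X) P := by
  have h : (φ.toAlgHom.comp (Polynomial.coeToPowerSeries.algHom k)) = Polynomial.aeval (φ X) := by
    apply Polynomial.algHom_ext
    simp [Polynomial.coeToPowerSeries.algHom_apply]
  have := congrFun (congrArg (fun f => f.toFun) h) P
  simpa [Polynomial.coeToPowerSeries.algHom_apply] using this

lemma chain_poly (φ : PowerSeries k ≃ₐ[k] PowerSeries k) (P : Polynomial k) :
    derivative k (φ (P : PowerSeries k)) =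
      φ ((Polynomial.derivative P : Polynomial k) : PowerSeries k) * derivative k (φ X) := by
  rw [map_poly, map_poly, Derivation.map_aeval (derivative k) P (φ X), smul_eq_mul]

lemma X_pow_dvd_derivative {m : ℕ} {f : PowerSeries k} (h : X ^ (m + 1) ∣ f) :
    X ^ m ∣ derivative k f := by
  obtain ⟨y, rfl⟩ := h
  rw [Derivation.leibniz, Derivation.leibniz_pow, derivative_X]
  simp only [smul_eq_mul, nsmul_eq_mul, mul_one, Nat.add_sub_cancel]
  exact dvd_add ⟨X * derivative k y, by ring⟩ ⟨y * (m + 1 : ℕ), by push_cast; ring⟩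

lemma chain (φ : PowerSeries k ≃ₐ[k] PowerSeries k) (x : PowerSeries k) :
    derivative k (φ x) = φ (derivative k x) * derivative k (φ X) := by
  ext n
  set T : Polynomial k := trunc (n + 2) x with hT
  have hdvd : X ^ (n + 2) ∣ (x - (T : PowerSeries k)) := by
    rw [X_pow_dvd_iff]
    intro m hm
    simp [hT, Polynomial.coeff_coe, coeff_trunc, hm]
  have h1 : X ^ (n + 1) ∣ derivative k (φ (x - (T : PowerSeries k))) :=
    X_pow_dvd_derivative (X_pow_dvd_map φ _ hdvd)
  have h2 : X ^ (n + 1) ∣ φ (derivative k (x - (T : PowerSeries k))) * derivative k (φ X) :=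
    Dvd.dvd.mul_right (X_pow_dvd_map φ _ (X_pow_dvd_derivative hdvd)) _
  have e1 : φ x = φ (T : PowerSeries k) + φ (x - (T : PowerSeries k)) := by
    rw [← map_add]; ring_nf
  have e2 : derivative k x = derivative k (T : PowerSeries k)
      + derivative k (x - (T : PowerSeries k)) := by
    rw [← map_add]; ring_nf
  rw [X_pow_dvd_iff] at h1 h2
  rw [e1, e2]
  simp only [map_add, add_mul]
  rw [h1 n (by omega), h2 n (by omega), add_zero, add_zero, derivative_coe, chain_poly φ T]

lemma derivative_prod {ι : Type*} [DecidableEq ι] (s : Finset ι) (f : ι → PowerSeries k) :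
    derivative k (∏ i ∈ s, f i) =
      ∑ i ∈ s, derivative k (f i) * ∏ j ∈ s.erase i, f j := by
  induction s using Finset.induction_on with
  | empty => simp
  | @insert a s ha ih =>
    have hsum : ∀ i ∈ s, derivative k (f i) * ∏ j ∈ (insert a s).erase i, f j
        = f a * (derivative k (f i) * ∏ j ∈ s.erase i, f j) := by
      intro i hi
      rw [Finset.erase_insert_of_ne (by rintro rfl; exact ha hi),
        Finset.prod_insert (fun h => ha (Finset.mem_of_mem_erase h))]
      ring
    rw [Finset.prod_insert ha, Derivation.leibniz, ih, Finset.sum_insert ha,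
      Finset.erase_insert ha, smul_eq_mul, smul_eq_mul, Finset.sum_congr rfl hsum,
      ← Finset.mul_sum, Finset.mul_sum]
    ring



lemma map_L_ne_zero (ψ : LaurentSeries k ≃ₐ[k] LaurentSeries k) {f : LaurentSeries k}
    (hf : f ≠ 0) : ψ f ≠ 0 := fun h0 => hf (by simpa using ψ.injective (by rw [h0, map_zero]))

lemma order_map_L (φ : PowerSeries k ≃ₐ[k] PowerSeries k)
    (ψ : LaurentSeries k ≃ₐ[k] LaurentSeries k) (hcomp : ∀ x, ψ (toL x) = toL (φ x))
    {f : LaurentSeries k} (hf : f ≠ 0) : (ψ f).order = f.order := by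
  set n := f.order.natAbs with hn
  have hXn : (toL (X ^ n : PowerSeries k)).order = (n : ℤ) := order_toL (order_X_pow n)
  have hXn0 : toL (X ^ n : PowerSeries k) ≠ 0 := by
    simp [toL_eq_zero, pow_ne_zero, X_ne_zero]
  set h := toL (X ^ n : PowerSeries k) * f with hh
  have hh0 : h ≠ 0 := mul_ne_zero hXn0 hf
  have hho : h.order = (n : ℤ) + f.order := by rw [hh, HahnSeries.order_mul hXn0 hf, hXn]
  have hpos : 0 ≤ h.order := by rw [hho]; omega
  obtain ⟨x, hx⟩ := exists_toL hpos
  have hx0 : x ≠ 0 := by rintro rfl; rw [toL_zero] at hx; exact hh0 hx.symm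
  have hlt : x.order < ⊤ := PowerSeries.order_finite_iff_ne_zero.mpr hx0
  set m := x.order.lift hlt with hm
  have hxm : x.order = (m : ℕ∞) := by simp [hm]
  have h1 : (toL x).order = (m : ℤ) := order_toL hxm
  have h2 : (toL (φ x)).order = (m : ℤ) := order_toL (by rw [order_map φ x]; exact hxm)
  have hψh : ψ h = toL (φ x) := by rw [← hx, hcomp]
  have hψho : (ψ h).order = h.order := by rw [hψh, h2, ← hx, h1]
  have hφXn : (toL (φ (X ^ n)) : LaurentSeries k).order = (n : ℤ) :=
    order_toL (by rw [order_map φ]; exact order_X_pow n)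
  have hφXn0 : toL (φ (X ^ n)) ≠ 0 := by
    simp only [ne_eq, toL_eq_zero]
    intro h0
    exact (pow_ne_zero n (X_ne_zero (R := k)))
      (φ.injective (by rw [h0, map_zero]))
  have hψf0 : ψ f ≠ 0 := map_L_ne_zero ψ hf
  have hsplit : ψ h = toL (φ (X ^ n)) * ψ f := by rw [hh, map_mul, hcomp]
  have : (ψ h).order = (n : ℤ) + (ψ f).order := by
    rw [hsplit, HahnSeries.order_mul hφXn0 hψf0, hφXn]
  omega

lemma ordGE_map_L (φ : PowerSeries k ≃ₐ[k] PowerSeries k)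
    (ψ : LaurentSeries k ≃ₐ[k] LaurentSeries k) (hcomp : ∀ x, ψ (toL x) = toL (φ x))
    {f : LaurentSeries k} {n : ℤ} (h : ordGE f n) : ordGE (ψ f) n := by
  rcases h with rfl | h
  · simp [ordGE_zero]
  by_cases hf : f = 0
  · simp [hf, ordGE_zero]
  · exact Or.inr (by rw [order_map_L φ ψ hcomp hf]; exact h)

lemma reindex_sum {G : Type} [Group G] [Fintype G] {N : Subgroup G} [DecidablePred (· ∈ N)]
    {M : Type*} [AddCommMonoid M] {t : G} (ht : t ∈ N) (F : G → M) :
    ∑ s ∈ Finset.univ.filter (· ∈ N), F (t * s) = ∑ s ∈ Finset.univ.filter (· ∈ N), F s := by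
  refine Finset.sum_nbij' (i := fun s => t * s) (j := fun s => t⁻¹ * s) ?_ ?_ ?_ ?_ ?_
  · intro a ha
    simp only [Finset.mem_filter, Finset.mem_univ, true_and] at *
    exact N.mul_mem ht ha
  · intro a ha
    simp only [Finset.mem_filter, Finset.mem_univ, true_and] at *
    exact N.mul_mem (N.inv_mem ht) ha
  · intro a _; simp
  · intro a _; simp
  · intro a _; rfl

lemma reindex_prod {G : Type} [Group G] [Fintype G] {N : Subgroup G} [DecidablePred (· ∈ N)]
    {M : Type*} [CommMonoid M] {t : G} (ht : t ∈ N) (F : G → M) :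
    ∏ s ∈ Finset.univ.filter (· ∈ N), F (t * s) = ∏ s ∈ Finset.univ.filter (· ∈ N), F s := by
  refine Finset.prod_nbij' (i := fun s => t * s) (j := fun s => t⁻¹ * s) ?_ ?_ ?_ ?_ ?_
  · intro a ha
    simp only [Finset.mem_filter, Finset.mem_univ, true_and] at *
    exact N.mul_mem ht ha
  · intro a ha
    simp only [Finset.mem_filter, Finset.mem_univ, true_and] at *
    exact N.mul_mem (N.inv_mem ht) ha
  · intro a _; simp
  · intro a _; simp
  · intro a _; rfl


end Stmt15

open Stmt15

/-- Let `𝔡 = y_G'·k[[t]] = {x : ord x ≥ d_G}` and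
`𝔡₁ = (y_G'/y_N')·k[[t]] = {x : ord x ≥ d_G − d_N}`.  Let `c : N → 𝔡` be a `1`-cocycle
whose class is `G/N`-invariant.  Then (i) there is `α ∈ 𝔡₁` with `ρ(s)(α) − α = c_s`
for `s ∈ N`; (ii) for any such `α` and any `g ∈ G`, `ρ(g)(α) − α ∈ 𝔡₁^N + 𝔡`;
(iii) in a decomposition `ρ(g)(α) − α = a_g + b_g` with `a_g ∈ 𝔡₁^N`, `b_g ∈ 𝔡`, the
class of `a_g` mod `𝔡^N` is well defined, depends only on `gN`, defines a `1`-cocycle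
of `G/N` with values in `𝔡₁^N/𝔡^N`, and its cohomology class is independent of `α`. -/
theorem statement15
    (p : ℕ) [Fact p.Prime]
    (k : Type) [Field k] [CharP k p] [PerfectField k]
    (G : Type) [Group G] [Fintype G]
    (ρ : G →* (PowerSeries k ≃ₐ[k] PowerSeries k)) (hρ : Function.Injective ρ)
    (ρL : G →* (LaurentSeries k ≃ₐ[k] LaurentSeries k))
    (hρL : ∀ g x, ρL g (toL x) = toL (ρ g x))
    (N : Subgroup G) (hN : N.Normal) [DecidablePred (· ∈ N)]
    (yN yG : PowerSeries k)
    (hyN : yN = ∏ s ∈ Finset.univ.filter (· ∈ N), ρ s PowerSeries.X)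
    (hyG : yG = ∏ g : G, ρ g PowerSeries.X)
    (dG dN : ℕ)
    (hdG : (PowerSeries.derivative k yG).order = (dG : ℕ∞))
    (hdN : (PowerSeries.derivative k yN).order = (dN : ℕ∞))
    -- `c` is a 1-cocycle on `N` with values in `𝔡` …
    (c : G → LaurentSeries k)
    (hcval : ∀ s ∈ N, ordGE (c s) (dG : ℤ))
    (hccoc : ∀ s ∈ N, ∀ t ∈ N, c (s * t) = c s + ρL s (c t))
    -- … whose cohomology class is `G/N`-invariant
    (hinv : ∀ g : G, ∃ b : LaurentSeries k, ordGE b (dG : ℤ) ∧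
      ∀ s ∈ N, ρL g (c (g⁻¹ * s * g)) = c s + ρL s b - b) :
    -- (i)
    (∃ α : LaurentSeries k, ordGE α ((dG : ℤ) - (dN : ℤ)) ∧
      ∀ s ∈ N, ρL s α - α = c s) ∧
    -- (ii)
    (∀ α : LaurentSeries k, ordGE α ((dG : ℤ) - (dN : ℤ)) → (∀ s ∈ N, ρL s α - α = c s) →
      ∀ g : G, ∃ a b : LaurentSeries k,
        (ordGE a ((dG : ℤ) - (dN : ℤ)) ∧ ∀ s ∈ N, ρL s a = a) ∧
        ordGE b (dG : ℤ) ∧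
        ρL g α - α = a + b) ∧
    -- (iii)
    (∀ (α : LaurentSeries k) (a b : G → LaurentSeries k),
      ordGE α ((dG : ℤ) - (dN : ℤ)) → (∀ s ∈ N, ρL s α - α = c s) →
      (∀ g, ordGE (a g) ((dG : ℤ) - (dN : ℤ)) ∧ (∀ s ∈ N, ρL s (a g) = a g) ∧
        ordGE (b g) (dG : ℤ) ∧ ρL g α - α = a g + b g) →
      -- independence of the decomposition
      (∀ (g : G) (a' b' : LaurentSeries k),
        ordGE a' ((dG : ℤ) - (dN : ℤ)) → (∀ s ∈ N, ρL s a' = a') → ordGE b' (dG : ℤ) →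
        ρL g α - α = a' + b' →
        ordGE (a g - a') (dG : ℤ) ∧ ∀ s ∈ N, ρL s (a g - a') = a g - a') ∧
      -- dependence only on the coset `gN`
      (∀ (g : G), ∀ n ∈ N,
        ordGE (a (g * n) - a g) (dG : ℤ) ∧
        ∀ s ∈ N, ρL s (a (g * n) - a g) = a (g * n) - a g) ∧
      -- `gN ↦ a_g mod 𝔡^N` is a 1-cocycle of `G/N` with values in `𝔡₁^N/𝔡^N`
      (∀ g h : G,
        ordGE (a (g * h) - a g - ρL g (a h)) (dG : ℤ) ∧
        ∀ s ∈ N, ρL s (a (g * h) - a g - ρL g (a h)) = a (g * h) - a g - ρL g (a h)) ∧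
      -- its cohomology class does not depend on the choice of `α`
      (∀ (α' : LaurentSeries k) (a' b' : G → LaurentSeries k),
        ordGE α' ((dG : ℤ) - (dN : ℤ)) → (∀ s ∈ N, ρL s α' - α' = c s) →
        (∀ g, ordGE (a' g) ((dG : ℤ) - (dN : ℤ)) ∧ (∀ s ∈ N, ρL s (a' g) = a' g) ∧
          ordGE (b' g) (dG : ℤ) ∧ ρL g α' - α' = a' g + b' g) →
        ∃ w : LaurentSeries k,
          ordGE w ((dG : ℤ) - (dN : ℤ)) ∧ (∀ s ∈ N, ρL s w = w) ∧
          ∀ g : G,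
            ordGE (a' g - a g - (ρL g w - w)) (dG : ℤ) ∧
            ∀ s ∈ N, ρL s (a' g - a g - (ρL g w - w)) =
              a' g - a g - (ρL g w - w))) := by
  classical
  -- membership in the filtered finset
  have hmemS : ∀ s : G, s ∈ Finset.univ.filter (· ∈ N) ↔ s ∈ N := fun s => by simp
  -- `ρL` preserves `ordGE`
  have hordL : ∀ (g : G) {f : LaurentSeries k} {n : ℤ}, ordGE f n → ordGE (ρL g f) n :=
    fun g {f n} hf => ordGE_map_L (ρ g) (ρL g) (hρL g) hf
  have hmulL : ∀ (g h : G) (f : LaurentSeries k), ρL (g * h) f = ρL g (ρL h f) := by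
    intro g h f; rw [map_mul]; rfl
  have hmulP : ∀ (g h : G) (f : PowerSeries k), ρ (g * h) f = ρ g (ρ h f) := by
    intro g h f; rw [map_mul]; rfl
  -- derivative facts
  have hdyN0 : derivative k yN ≠ 0 := by
    intro h0; rw [h0, PowerSeries.order_zero] at hdN; simp at hdN
  have hyN0 : yN ≠ 0 := by intro h0; apply hdyN0; rw [h0, map_zero]
  have hρyN : ∀ g ∈ N, ρ g yN = yN := by
    intro g hg
    rw [hyN, map_prod]
    have he : ∀ s ∈ Finset.univ.filter (· ∈ N), ρ g (ρ s X) = ρ (g * s) X := by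
      intro s _; rw [hmulP]
    rw [Finset.prod_congr rfl he]
    exact reindex_prod hg (fun r => ρ r X)
  have hchain : ∀ g ∈ N, derivative k yN = ρ g (derivative k yN) * derivative k (ρ g X) := by
    intro g hg
    conv_lhs => rw [← hρyN g hg]
    exact chain (ρ g) yN
  have hfg'0 : ∀ g ∈ N, derivative k (ρ g X) ≠ 0 := by
    intro g hg h0
    apply hdyN0
    rw [hchain g hg, h0, mul_zero]
  -- Laurent series abbreviations
  have hDN0 : toL (derivative k yN) ≠ 0 := by simpa using hdyN0
  have hYN0 : toL yN ≠ 0 := by simpa using hyN0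
  have hTX0 : toL (X : PowerSeries k) ≠ 0 := by simpa using X_ne_zero (R := k)
  have hfs0 : ∀ g : G, toL (ρ g X) ≠ 0 := by
    intro g
    simp only [ne_eq, toL_eq_zero]
    intro h0
    exact X_ne_zero (R := k) ((ρ g).injective (by rw [h0, map_zero]))
  -- the trace element `u`
  set u : LaurentSeries k :=
    toL yN * (toL (X : PowerSeries k))⁻¹ * (toL (derivative k yN))⁻¹ with hu
  have key1 : ∀ g ∈ N, ρL g u =
      toL yN * (toL (ρ g X))⁻¹ * ((toL (derivative k yN))⁻¹ * toL (derivative k (ρ g X))) := by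
    intro g hg
    have hsplitD : toL (derivative k yN)
        = toL (ρ g (derivative k yN)) * toL (derivative k (ρ g X)) := by
      conv_lhs => rw [hchain g hg]
      rw [toL_mul]
    have hfg'L : toL (derivative k (ρ g X)) ≠ 0 := by simpa using hfg'0 g hg
    have hρD : toL (ρ g (derivative k yN))
        = toL (derivative k yN) * (toL (derivative k (ρ g X)))⁻¹ :=
      (eq_mul_inv_iff_mul_eq₀ hfg'L).mpr hsplitD.symm
    rw [hu, map_mul, map_mul, map_inv₀, map_inv₀, hρL g, hρL g, hρL g, hρyN g hg, hρD,
      mul_inv, inv_inv]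
  have hprodrule : derivative k yN = ∑ g ∈ Finset.univ.filter (· ∈ N),
      derivative k (ρ g X) * ∏ r ∈ (Finset.univ.filter (· ∈ N)).erase g, ρ r X := by
    conv_lhs => rw [hyN]
    exact derivative_prod _ _
  have herase : ∀ g ∈ Finset.univ.filter (· ∈ N),
      toL (∏ r ∈ (Finset.univ.filter (· ∈ N)).erase g, ρ r X)
        = toL yN * (toL (ρ g X))⁻¹ := by
    intro g hg
    apply (eq_mul_inv_iff_mul_eq₀ (hfs0 g)).mpr
    rw [← toL_mul, Finset.prod_erase_mul _ _ hg, ← hyN]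
  have key2 : ∑ g ∈ Finset.univ.filter (· ∈ N),
      toL (derivative k (ρ g X)) * (toL (ρ g X))⁻¹
        = toL (derivative k yN) * (toL yN)⁻¹ := by
    apply (eq_mul_inv_iff_mul_eq₀ hYN0).mpr
    rw [Finset.sum_mul]
    have he : ∀ g ∈ Finset.univ.filter (· ∈ N),
        toL (derivative k (ρ g X)) * (toL (ρ g X))⁻¹ * toL yN
          = toL (derivative k (ρ g X) * ∏ r ∈ (Finset.univ.filter (· ∈ N)).erase g, ρ r X) := by
      intro g hg
      rw [toL_mul, herase g hg]
      field_simp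
    rw [Finset.sum_congr rfl he, ← toL_sum, ← hprodrule]
  have trace : ∑ g ∈ Finset.univ.filter (· ∈ N), ρL g u = 1 := by
    have he : ∀ g ∈ Finset.univ.filter (· ∈ N), ρL g u =
        (toL yN * (toL (derivative k yN))⁻¹)
          * (toL (derivative k (ρ g X)) * (toL (ρ g X))⁻¹) := by
      intro g hg
      rw [key1 g ((hmemS g).mp hg)]
      ring
    rw [Finset.sum_congr rfl he, ← Finset.mul_sum, key2]
    field_simp
  -- order of `u`
  have hordYN : ordGE (toL yN) 1 := by
    have hX : X ∣ yN := by
      rw [X_dvd_iff, hyN, map_prod]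
      apply Finset.prod_eq_zero (i := (1 : G))
      · rw [hmemS]; exact N.one_mem
      · exact constantCoeff_apply_X (ρ 1)
    obtain ⟨z, hz⟩ := hX
    rw [hz, toL_mul]
    have h1 : ordGE (toL (X : PowerSeries k)) 1 :=
      Or.inr (le_of_eq (order_toL (n := 1) (by exact_mod_cast order_X (R := k))).symm)
    have := ordGE_mul h1 (ordGE_toL z)
    simpa using this
  have hordTXinv : ordGE (toL (X : PowerSeries k))⁻¹ (-1 : ℤ) := by
    refine Or.inr (le_of_eq ?_)
    rw [order_inv hTX0, order_toL (n := 1) (by exact_mod_cast order_X (R := k))]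
    norm_num
  have hordDNinv : ordGE (toL (derivative k yN))⁻¹ (-(dN : ℤ)) := by
    refine Or.inr (le_of_eq ?_)
    rw [order_inv hDN0, order_toL hdN]
  have hord_u : ordGE u (-(dN : ℤ)) := by
    have h := ordGE_mul (ordGE_mul hordYN hordTXinv) hordDNinv
    rw [show -(dN : ℤ) = 1 + -1 + -(dN : ℤ) by ring]
    exact h
  -- conjugation facts
  have hconjmem : ∀ (g : G), ∀ s ∈ N, g⁻¹ * s * g ∈ N := by
    intro g s hs
    have := hN.conj_mem s hs g⁻¹
    rwa [inv_inv] at this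
  have hconjinv : ∀ (g : G) (x : LaurentSeries k), (∀ n ∈ N, ρL n x = x) →
      ∀ s ∈ N, ρL s (ρL g x) = ρL g x := by
    intro g x hx s hs
    rw [← hmulL, show s * g = g * (g⁻¹ * s * g) by group, hmulL, hx _ (hconjmem g s hs)]
  -- Part (i)
  have parti : ∃ α : LaurentSeries k, ordGE α ((dG : ℤ) - (dN : ℤ)) ∧
      ∀ s ∈ N, ρL s α - α = c s := by
    refine ⟨-∑ s ∈ Finset.univ.filter (· ∈ N), ρL s u * c s, ?_, ?_⟩
    · apply ordGE_neg
      rw [show (dG : ℤ) - (dN : ℤ) = -(dN : ℤ) + dG by ring]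
      apply ordGE_sum
      intro s hs
      exact ordGE_mul (hordL s hord_u) (hcval s ((hmemS s).mp hs))
    · intro t ht
      have expand : ρL t (-∑ s ∈ Finset.univ.filter (· ∈ N), ρL s u * c s)
          = -∑ s ∈ Finset.univ.filter (· ∈ N), ρL (t * s) u * (c (t * s) - c t) := by
        rw [map_neg, map_sum]
        congr 1
        apply Finset.sum_congr rfl
        intro s hs
        rw [map_mul, ← hmulL t s u]
        congr 1
        rw [hccoc t ht s ((hmemS s).mp hs)]
        ring
      have e1 : ∑ s ∈ Finset.univ.filter (· ∈ N), ρL (t * s) u * (c (t * s) - c t)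
          = (∑ s ∈ Finset.univ.filter (· ∈ N), ρL s u * c s)
            - (∑ s ∈ Finset.univ.filter (· ∈ N), ρL s u) * c t := by
        simp only [mul_sub]
        rw [Finset.sum_sub_distrib]
        congr 1
        · exact reindex_sum ht (fun r => ρL r u * c r)
        · rw [← Finset.sum_mul]
          congr 1
          exact reindex_sum ht (fun r => ρL r u)
      rw [expand, e1, trace, one_mul]
      ring
  refine ⟨parti, ?_, ?_⟩
  -- Part (ii)
  · intro α hα1 hα2 g
    obtain ⟨b, hb, hbs⟩ := hinv g
    refine ⟨ρL g α - α - b, b, ⟨?_, ?_⟩, hb, by ring⟩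
    · exact ordGE_sub (ordGE_sub (hordL g hα1) hα1) (ordGE_mono hb (by omega))
    · intro s hs
      have hsgα : ρL (g⁻¹ * s * g) α = α + c (g⁻¹ * s * g) := by
        rw [← hα2 _ (hconjmem g s hs)]; ring
      have hkey : ρL s (ρL g α) = ρL g α + c s + ρL s b - b := by
        have h1 : ρL s (ρL g α) = ρL g (ρL (g⁻¹ * s * g) α) := by
          rw [← hmulL, ← hmulL, show s * g = g * (g⁻¹ * s * g) by group]
        rw [h1, hsgα, map_add, hbs s hs]
        ring
      have hsα : ρL s α = α + c s := by rw [← hα2 s hs]; ring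
      simp only [map_sub]
      rw [hkey, hsα]
      ring
  -- Part (iii)
  · intro α a b hα1 hα2 hdec
    have hρsα : ∀ s ∈ N, ρL s α = α + c s := by
      intro s hs; rw [← hα2 s hs]; ring
    refine ⟨?_, ?_, ?_, ?_⟩
    -- independence of decomposition
    · intro g a' b' ha'1 hinva' hb' heq
      have hdiff : a g - a' = b' - b g := by
        linear_combination heq - (hdec g).2.2.2
      constructor
      · rw [hdiff]; exact ordGE_sub hb' (hdec g).2.2.1
      · intro s hs
        rw [map_sub, (hdec g).2.1 s hs, hinva' s hs]
    -- dependence only on the coset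
    · intro g n hn
      have hgnα : ρL (g * n) α = ρL g α + ρL g (c n) := by
        rw [hmulL, hρsα n hn, map_add]
      have hdiff : a (g * n) - a g = ρL g (c n) + b g - b (g * n) := by
        linear_combination hgnα + (hdec g).2.2.2 - (hdec (g * n)).2.2.2
      constructor
      · rw [hdiff]
        exact ordGE_sub (ordGE_add (hordL g (hcval n hn)) (hdec g).2.2.1) (hdec (g * n)).2.2.1
      · intro s hs
        rw [map_sub, (hdec (g * n)).2.1 s hs, (hdec g).2.1 s hs]
    -- cocycle property
    · intro g h
      have E3 : ρL g (ρL h α) = ρL g α + ρL g (a h) + ρL g (b h) := by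
        have hh : ρL h α = α + (a h + b h) := by rw [← (hdec h).2.2.2]; ring
        rw [hh, map_add, map_add]
        ring
      have e : a (g * h) - a g - ρL g (a h) = b g + ρL g (b h) - b (g * h) := by
        have E4 : ρL (g * h) α = ρL g (ρL h α) := hmulL g h α
        linear_combination (hdec g).2.2.2 + E3 + E4 - (hdec (g * h)).2.2.2
      constructor
      · rw [e]
        exact ordGE_sub (ordGE_add (hdec g).2.2.1 (hordL g (hdec h).2.2.1)) (hdec (g * h)).2.2.1
      · intro s hs
        simp only [map_sub]
        rw [(hdec (g * h)).2.1 s hs, (hdec g).2.1 s hs,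
          hconjinv g (a h) (fun n hn => (hdec h).2.1 n hn) s hs]
    -- independence of `α`
    · intro α' a' b' hα'1 hα'2 hdec'
      have hwinv : ∀ n ∈ N, ρL n (α' - α) = α' - α := by
        intro n hn
        rw [map_sub, hρsα n hn]
        have : ρL n α' = α' + c n := by rw [← hα'2 n hn]; ring
        rw [this]
        ring
      refine ⟨α' - α, ordGE_sub hα'1 hα1, hwinv, ?_⟩
      intro g
      have e : a' g - a g - (ρL g (α' - α) - (α' - α)) = b g - b' g := by
        have E3 : ρL g (α' - α) = ρL g α' - ρL g α := map_sub _ _ _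
        linear_combination (hdec g).2.2.2 - (hdec' g).2.2.2 - E3
      constructor
      · rw [e]; exact ordGE_sub (hdec g).2.2.1 (hdec' g).2.2.1
      · intro s hs
        rw [map_sub, map_sub, (hdec' g).2.1 s hs, (hdec g).2.1 s hs, map_sub,
          hconjinv g (α' - α) hwinv s hs, hwinv s hs]
end

section
/- Let G be a group, N a normal subgroup, and M a G-module (abelian group with G-action written g·m). Let η : G×G → M be a 2-cocycle (g·η(h,k) − η(gh,k) + η(g,hk) − η(g,h) = 0 for all g,h,k ∈ G) whose restriction to N×N is a coboundary: there is f : N → M with η(s,t) = s·f(t) − f(st) + f(s) for all s,t ∈ N. For g ∈ G define ξ_g : N → M by ξ_g(s) = η(s,g) − η(g, g^{-1}sg) + g·f(g^{-1}sg) − f(s). Then: (i) for each g ∈ G, ξ_g is a 1-cocycle on N, i.e. ξ_g(st) = ξ_g(s) + s·ξ_g(t); (ii) for g ∈ G and n ∈ N, ξ_{gn} − ξ_g is a coboundary on N, so the class [ξ_g] ∈ H^1(N,M) depends only on the coset gN; (iii) for g, h ∈ G the cocycle ξ_{gh} − ξ_g − g⋆ξ_h is a coboundary on N, where (g⋆c)(s)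 := g·c(g^{-1}sg); hence gN ↦ [ξ_g] is a 1-cocycle of G/N with values in H^1(N,M) equipped with the standard G/N-action. -/
/-- Let `N ⊴ G` and `M` a `G`-module.  Let `η` be a `2`-cocycle on
`G` whose restriction to `N × N` is the coboundary of `f : N → M`, and for `g ∈ G` let
`ξ_g(s) = η(s,g) − η(g, g⁻¹sg) + g·f(g⁻¹sg) − f(s)`.  Then (i) each `ξ_g` is a
`1`-cocycle on `N`; (ii) the class `[ξ_g] ∈ H¹(N,M)` depends only on the coset `gN`;
(iii) `gN ↦ [ξ_g]` is a `1`-cocycle of `G/N` with values in `H¹(N,M)` for the standard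
`G/N`-action `(g⋆c)(s) = g·c(g⁻¹sg)`. -/
theorem statement16
    (G : Type) [Group G] (N : Subgroup G) (hN : N.Normal)
    (M : Type) [AddCommGroup M] [DistribMulAction G M]
    (η : G → G → M)
    (hη : ∀ g h l : G, g • η h l - η (g * h) l + η g (h * l) - η g h = 0)
    (f : G → M)
    (hf : ∀ s ∈ N, ∀ t ∈ N, η s t = s • f t - f (s * t) + f s)
    (ξ : G → G → M)
    (hξ : ∀ g s : G, ξ g s = η s g - η g (g⁻¹ * s * g) + g • f (g⁻¹ * s * g) - f s) :
    -- (i) each `ξ_g` is a 1-cocycle on `N`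
    (∀ g : G, ∀ s ∈ N, ∀ t ∈ N, ξ g (s * t) = ξ g s + s • ξ g t) ∧
    -- (ii) the class of `ξ_g` depends only on the coset `gN`
    (∀ g : G, ∀ n ∈ N, ∃ m : M, ∀ s ∈ N, ξ (g * n) s - ξ g s = s • m - m) ∧
    -- (iii) `gN ↦ [ξ_g]` is a 1-cocycle of `G/N` with values in `H¹(N, M)`
    (∀ g h : G, ∃ m : M, ∀ s ∈ N,
      ξ (g * h) s - ξ g s - g • ξ h (g⁻¹ * s * g) = s • m - m) := by
  refine ⟨?_, ?_, ?_⟩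
  · -- part (i)
    intro g s hs t ht
    have hx : g⁻¹ * s * g ∈ N := by simpa using hN.conj_mem s hs g⁻¹
    have hy : g⁻¹ * t * g ∈ N := by simpa using hN.conj_mem t ht g⁻¹
    have hgx : g * (g⁻¹ * s * g) = s * g := by group
    have hgy : g * (g⁻¹ * t * g) = t * g := by group
    have hxy : g⁻¹ * (s * t) * g = (g⁻¹ * s * g) * (g⁻¹ * t * g) := by group
    have e1 := hη s t g
    have e2 := hη s g (g⁻¹ * t * g)
    have e3 := hη g (g⁻¹ * s * g) (g⁻¹ * t * g)
    have e4 := hf _ hx _ hy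
    have e5 := hf s hs t ht
    rw [hgy] at e2
    rw [hgx] at e3
    have e4' : g • η (g⁻¹ * s * g) (g⁻¹ * t * g)
        = s • g • f (g⁻¹ * t * g) - g • f ((g⁻¹ * s * g) * (g⁻¹ * t * g))
          + g • f (g⁻¹ * s * g) := by
      rw [e4, smul_add, smul_sub, ← mul_smul g (g⁻¹ * s * g), hgx, mul_smul]
    rw [hξ, hξ, hξ, hxy, smul_sub, smul_add, smul_sub]
    linear_combination (norm := abel1) -e1 + e2 - e3 + e4' - e5
  · -- part (ii)
    intro g n hn
    refine ⟨g • f n - η g n, ?_⟩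
    intro s hs
    have hx : g⁻¹ * s * g ∈ N := by simpa using hN.conj_mem s hs g⁻¹
    have hw : n⁻¹ * (g⁻¹ * s * g) * n ∈ N := by
      simpa using hN.conj_mem _ hx n⁻¹
    have hconj : (g * n)⁻¹ * s * (g * n) = n⁻¹ * (g⁻¹ * s * g) * n := by group
    have hgx : g * (g⁻¹ * s * g) = s * g := by group
    have hnw : n * (n⁻¹ * (g⁻¹ * s * g) * n) = (g⁻¹ * s * g) * n := by group
    have eA := hη s g n
    have eB := hη g (g⁻¹ * s * g) n
    have eC := hη g n (n⁻¹ * (g⁻¹ * s * g) * n)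
    have eD := hf n hn _ hw
    have eE := hf _ hx n hn
    rw [hgx] at eB
    rw [hnw] at eC
    have eD' : g • η n (n⁻¹ * (g⁻¹ * s * g) * n)
        = g • n • f (n⁻¹ * (g⁻¹ * s * g) * n) - g • f ((g⁻¹ * s * g) * n) + g • f n := by
      rw [eD, hnw, smul_add, smul_sub]
    have eE' : g • η (g⁻¹ * s * g) n
        = s • g • f n - g • f ((g⁻¹ * s * g) * n) + g • f (g⁻¹ * s * g) := by
      rw [eE, smul_add, smul_sub, ← mul_smul g (g⁻¹ * s * g), hgx, mul_smul]
    rw [hξ, hξ, hconj, mul_smul, smul_sub]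
    linear_combination (norm := abel1) eA - eB + eC - eD' + eE'
  · -- part (iii)
    intro g h
    refine ⟨-η g h, ?_⟩
    intro s hs
    have hconj : (g * h)⁻¹ * s * (g * h) = h⁻¹ * (g⁻¹ * s * g) * h := by group
    have hgx : g * (g⁻¹ * s * g) = s * g := by group
    have hhz : h * (h⁻¹ * (g⁻¹ * s * g) * h) = (g⁻¹ * s * g) * h := by group
    have eA := hη s g h
    have eB := hη g (g⁻¹ * s * g) h
    have eC := hη g h (h⁻¹ * (g⁻¹ * s * g) * h)
    rw [hgx] at eB
    rw [hhz] at eC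
    rw [hξ (g * h), hξ g, hξ h, hconj, mul_smul, smul_sub, smul_add, smul_sub, smul_neg]
    linear_combination (norm := abel1) eA - eB + eC
end
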